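/- arXiv:1307.6885 — 5 statements merged into one kernel-verified Lean document; each statement's English description precedes it below -/
import Mathlib

section
/- Let A ∈ ℂ^{n×n} be Hermitian and B ∈ ℂ^{n×n} be Hermitian positive definite with condition number κ(B) = ‖B‖₂·‖B⁻¹‖₂. Let Q ∈ ℂ^{n×r} with Q*BQ = I_r and T = Q*AQ, and suppose ‖A − (BQ)T(BQ)*‖_B ≤ 2ε for some ε ≥ 0. Let Ω ∈ ℂ^{n×r} be such that F := Q*BΩ is invertible, and set T̃ = (F*)⁻¹(Ω*AΩ)F⁻¹ (this is the single-pass approximation (Ω*BQ)⁻¹(Ω*AΩ)(Q*BΩ)⁻¹). Then ‖T − T̃‖₂ ≤ 2ε·√κ(B)·‖Ω‖₂²·‖F⁻¹‖₂², i.e., ‖T − T̃‖₂ ≤ 2ε·√κ(B)·σ_max(Ω)²/σ_min(F)². -/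
open Matrix ComplexOrder

noncomputable section

/-- Euclidean (ℓ²) norm of a complex vector. -/
def vecNorm2 {m : Type*} [Fintype m] (x : m → ℂ) : ℝ :=
  Real.sqrt (∑ i, ‖x i‖ ^ 2)

/-- Spectral (ℓ²-operator) norm of a complex matrix. -/
def specNorm {m p : Type*} [Fintype m] [Fintype p] (M : Matrix m p ℂ) : ℝ :=
  sSup {t : ℝ | ∃ x : p → ℂ, x ≠ 0 ∧ t = vecNorm2 (M *ᵥ x) / vecNorm2 x}

/-- The B-inner product ⟨x,y⟩_B = y*Bx. -/
def Binner {m : Type*} [Fintype m] (B : Matrix m m ℂ) (x y : m → ℂ) : ℂ :=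
  star y ⬝ᵥ B *ᵥ x

/-- The B-norm of a vector, ‖x‖_B = √(x*Bx). -/
def vecBnorm {m : Type*} [Fintype m] (B : Matrix m m ℂ) (x : m → ℂ) : ℝ :=
  Real.sqrt (star x ⬝ᵥ B *ᵥ x).re

/-- The induced B-norm of a matrix, ‖M‖_B = sup_{x ≠ 0} ‖Mx‖_B / ‖x‖_B. -/
def matBnorm {m : Type*} [Fintype m] (B M : Matrix m m ℂ) : ℝ :=
  sSup {t : ℝ | ∃ x : m → ℂ, x ≠ 0 ∧ t = vecBnorm B (M *ᵥ x) / vecBnorm B x}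

open scoped Matrix.Norms.L2Operator MatrixOrder

section Helpers

set_option linter.unusedSectionVars false

variable {m p q : Type*} [Fintype m] [Fintype p] [Fintype q]
  [DecidableEq m] [DecidableEq p] [DecidableEq q]

lemma vecNorm2_eq (x : m → ℂ) :
    vecNorm2 x = ‖(WithLp.equiv 2 (m → ℂ)).symm x‖ := by
  rw [EuclideanSpace.norm_eq]
  simp [vecNorm2]

lemma re_star_dotProduct (w : m → ℂ) : (star w ⬝ᵥ w).re = ∑ i, ‖w i‖ ^ 2 := by
  simp only [dotProduct, Pi.star_apply, Complex.re_sum]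
  refine Finset.sum_congr rfl fun i _ => ?_
  rw [mul_comm, RCLike.star_def, Complex.mul_conj', ← Complex.ofReal_pow, Complex.ofReal_re]

lemma vecNorm2_nonneg (x : m → ℂ) : 0 ≤ vecNorm2 x := Real.sqrt_nonneg _

lemma vecNorm2_pos {x : m → ℂ} (hx : x ≠ 0) : 0 < vecNorm2 x := by
  rw [vecNorm2_eq, norm_pos_iff]
  intro h
  apply hx
  have := congrArg (WithLp.equiv 2 (m → ℂ)) h
  simpa using this

lemma mulVec_norm_le (M : Matrix m p ℂ) (x : p → ℂ) :
    vecNorm2 (M *ᵥ x) ≤ ‖M‖ * vecNorm2 x := by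
  rw [vecNorm2_eq (M *ᵥ x), vecNorm2_eq x]
  exact M.l2_opNorm_mulVec ((WithLp.equiv 2 (p → ℂ)).symm x)

lemma specL (M : Matrix m p ℂ) (x : p → ℂ) :
    vecNorm2 (M *ᵥ x) =
      ‖((toEuclideanLin (𝕜 := ℂ) (m := m) (n := p)).trans LinearMap.toContinuousLinearMap M)
        ((WithLp.equiv 2 (p → ℂ)).symm x)‖ := by
  rw [vecNorm2_eq]
  rfl

lemma ratio_le_opNorm (M : Matrix m p ℂ) {x : p → ℂ} (hx : x ≠ 0) :
    vecNorm2 (M *ᵥ x) / vecNorm2 x ≤ ‖M‖ :=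
  (div_le_iff₀ (vecNorm2_pos hx)).mpr (mulVec_norm_le M x)

lemma specNorm_eq (M : Matrix m p ℂ) : specNorm M = ‖M‖ := by
  have hbdd : BddAbove {t : ℝ | ∃ x : p → ℂ, x ≠ 0 ∧ t = vecNorm2 (M *ᵥ x) / vecNorm2 x} := by
    refine ⟨‖M‖, ?_⟩
    rintro t ⟨x, hx, rfl⟩
    exact ratio_le_opNorm M hx
  refine le_antisymm ?_ ?_
  · refine Real.sSup_le ?_ (norm_nonneg M)
    rintro t ⟨x, hx, rfl⟩
    exact ratio_le_opNorm M hx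
  · rw [Matrix.l2_opNorm_def]
    refine ContinuousLinearMap.opNorm_le_bound _ ?_ ?_
    · refine Real.sSup_nonneg ?_
      rintro t ⟨x, hx, rfl⟩
      exact div_nonneg (vecNorm2_nonneg _) (vecNorm2_nonneg _)
    · intro v
      set x : p → ℂ := WithLp.equiv 2 (p → ℂ) v with hxdef
      have hv : v = (WithLp.equiv 2 (p → ℂ)).symm x := (Equiv.symm_apply_apply _ _).symm
      by_cases hx : x = 0
      · have : v = 0 := by rw [hv, hx]; simp
        simp [this]
      · have h1 : ‖((toEuclideanLin (𝕜 := ℂ) (m := m) (n := p)).trans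
            LinearMap.toContinuousLinearMap M) v‖ = vecNorm2 (M *ᵥ x) := by
          rw [hv, ← specL]
        have h2 : ‖v‖ = vecNorm2 x := by rw [hv, ← vecNorm2_eq]
        rw [h1, h2]
        have hmem : vecNorm2 (M *ᵥ x) / vecNorm2 x ∈
            {t : ℝ | ∃ y : p → ℂ, y ≠ 0 ∧ t = vecNorm2 (M *ᵥ y) / vecNorm2 y} :=
          ⟨x, hx, rfl⟩
        have hle := le_csSup hbdd hmem
        have hpos := vecNorm2_pos (x := x) hx
        calc vecNorm2 (M *ᵥ x) = (vecNorm2 (M *ᵥ x) / vecNorm2 x) * vecNorm2 x := by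
              field_simp
          _ ≤ sSup _ * vecNorm2 x := mul_le_mul_of_nonneg_right hle hpos.le

lemma vecBnorm_nonneg (B : Matrix m m ℂ) (x : m → ℂ) : 0 ≤ vecBnorm B x :=
  Real.sqrt_nonneg _

lemma matBnorm_nonneg (B M : Matrix m m ℂ) : 0 ≤ matBnorm B M := by
  refine Real.sSup_nonneg ?_
  rintro t ⟨x, hx, rfl⟩
  exact div_nonneg (vecBnorm_nonneg _ _) (vecBnorm_nonneg _ _)

variable {B : Matrix m m ℂ}

lemma vecBnorm_eq_sqrt_mulVec (hB : B.PosDef) (v : m → ℂ) :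
    vecBnorm B v = vecNorm2 (CFC.sqrt B *ᵥ v) := by
  set S := CFC.sqrt B with hSdef
  have hSH : Sᴴ = S := (Matrix.nonneg_iff_posSemidef.mp (CFC.sqrt_nonneg B)).1
  have hSS : S * S = B := CFC.sqrt_mul_sqrt_self B (Matrix.nonneg_iff_posSemidef.mpr hB.posSemidef)
  have key : star v ⬝ᵥ B *ᵥ v = star (S *ᵥ v) ⬝ᵥ (S *ᵥ v) := by
    rw [← hSS, ← mulVec_mulVec, dotProduct_mulVec, star_mulVec, hSH]
  rw [vecBnorm, key, re_star_dotProduct, vecNorm2]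

lemma vecBnorm_pos (hB : B.PosDef) {x : m → ℂ} (hx : x ≠ 0) : 0 < vecBnorm B x := by
  rw [vecBnorm]
  exact Real.sqrt_pos.mpr (hB.re_dotProduct_pos hx)

lemma sqrt_isUnit_det (hB : B.PosDef) : IsUnit (CFC.sqrt B).det := by
  have hSS : CFC.sqrt B * CFC.sqrt B = B := CFC.sqrt_mul_sqrt_self B (Matrix.nonneg_iff_posSemidef.mpr hB.posSemidef)
  have h : IsUnit B.det := (Matrix.isUnit_iff_isUnit_det B).mp hB.isUnit
  rw [← hSS, Matrix.det_mul] at h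
  exact isUnit_of_mul_isUnit_left h

lemma vecNorm2_le_Binv (hB : B.PosDef) (v : m → ℂ) :
    vecNorm2 v ≤ ‖(CFC.sqrt B)⁻¹‖ * vecBnorm B v := by
  set S := CFC.sqrt B with hSdef
  have hv : v = S⁻¹ *ᵥ (S *ᵥ v) := by
    rw [mulVec_mulVec, Matrix.nonsing_inv_mul S (sqrt_isUnit_det hB), one_mulVec]
  calc vecNorm2 v = vecNorm2 (S⁻¹ *ᵥ (S *ᵥ v)) := by rw [← hv]
    _ ≤ ‖S⁻¹‖ * vecNorm2 (S *ᵥ v) := mulVec_norm_le _ _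
    _ = ‖S⁻¹‖ * vecBnorm B v := by rw [← vecBnorm_eq_sqrt_mulVec hB]

lemma vecBnorm_le_B (hB : B.PosDef) (v : m → ℂ) :
    vecBnorm B v ≤ ‖CFC.sqrt B‖ * vecNorm2 v := by
  rw [vecBnorm_eq_sqrt_mulVec hB]
  exact mulVec_norm_le _ _

set_option maxHeartbeats 1000000 in
/-- The key comparison: spectral norm is at most √κ(B) times the B-norm. -/
lemma specNorm_le_kappa_matBnorm (hB : B.PosDef) (M : Matrix m m ℂ) :
    specNorm M ≤ Real.sqrt (specNorm B * specNorm B⁻¹) * matBnorm B M := by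
  set S := CFC.sqrt B with hSdef
  have hSH : Sᴴ = S := (Matrix.nonneg_iff_posSemidef.mp (CFC.sqrt_nonneg B)).1
  have hSS : S * S = B := CFC.sqrt_mul_sqrt_self B (Matrix.nonneg_iff_posSemidef.mpr hB.posSemidef)
  have hSnorm : ‖S‖ * ‖S‖ = ‖B‖ := by
    rw [← Matrix.l2_opNorm_conjTranspose_mul_self S, hSH, hSS]
  have hSinorm : ‖S⁻¹‖ * ‖S⁻¹‖ = ‖B⁻¹‖ := by
    rw [← Matrix.l2_opNorm_conjTranspose_mul_self S⁻¹, Matrix.conjTranspose_nonsing_inv, hSH,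
      ← Matrix.mul_inv_rev, hSS]
  have hkappa : Real.sqrt (specNorm B * specNorm B⁻¹) = ‖S‖ * ‖S⁻¹‖ := by
    rw [specNorm_eq, specNorm_eq]
    have : ‖B‖ * ‖B⁻¹‖ = (‖S‖ * ‖S⁻¹‖) ^ 2 := by rw [← hSnorm, ← hSinorm]; ring
    rw [this, Real.sqrt_sq (by positivity)]
  -- the B-norm ratio set is bounded above
  have hbddB : BddAbove {t : ℝ | ∃ x : m → ℂ, x ≠ 0 ∧ t = vecBnorm B (M *ᵥ x) / vecBnorm B x} := by
    refine ⟨‖S‖ * ‖M‖ * ‖S⁻¹‖, ?_⟩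
    rintro t ⟨x, hx, rfl⟩
    rw [div_le_iff₀ (vecBnorm_pos hB hx)]
    calc vecBnorm B (M *ᵥ x) ≤ ‖S‖ * vecNorm2 (M *ᵥ x) := vecBnorm_le_B hB _
      _ ≤ ‖S‖ * (‖M‖ * vecNorm2 x) :=
          mul_le_mul_of_nonneg_left (mulVec_norm_le M x) (norm_nonneg _)
      _ ≤ ‖S‖ * (‖M‖ * (‖S⁻¹‖ * vecBnorm B x)) := by
          refine mul_le_mul_of_nonneg_left
            (mul_le_mul_of_nonneg_left (vecNorm2_le_Binv hB x) (norm_nonneg _)) (norm_nonneg _)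
      _ = ‖S‖ * ‖M‖ * ‖S⁻¹‖ * vecBnorm B x := by ring
  have hc : (0 : ℝ) ≤ ‖S‖ * ‖S⁻¹‖ := by positivity
  rw [hkappa, specNorm]
  refine Real.sSup_le ?_ (mul_nonneg hc (matBnorm_nonneg B M))
  rintro t ⟨x, hx, rfl⟩
  have hNx := vecNorm2_pos (x := x) hx
  have hBx := vecBnorm_pos hB hx
  have hstep : vecNorm2 (M *ᵥ x) / vecNorm2 x ≤
      (‖S‖ * ‖S⁻¹‖) * (vecBnorm B (M *ᵥ x) / vecBnorm B x) := by
    rw [mul_div_assoc' , div_le_div_iff₀ hNx hBx]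
    have h1 : vecNorm2 (M *ᵥ x) ≤ ‖S⁻¹‖ * vecBnorm B (M *ᵥ x) := vecNorm2_le_Binv hB _
    have h2 : vecBnorm B x ≤ ‖S‖ * vecNorm2 x := vecBnorm_le_B hB x
    calc vecNorm2 (M *ᵥ x) * vecBnorm B x
        ≤ (‖S⁻¹‖ * vecBnorm B (M *ᵥ x)) * (‖S‖ * vecNorm2 x) :=
          mul_le_mul h1 h2 (vecBnorm_nonneg _ _)
            (mul_nonneg (norm_nonneg _) (vecBnorm_nonneg _ _))
      _ = ‖S‖ * ‖S⁻¹‖ * vecBnorm B (M *ᵥ x) * vecNorm2 x := by ring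
  refine hstep.trans ?_
  refine mul_le_mul_of_nonneg_left ?_ hc
  exact le_csSup hbddB ⟨x, hx, rfl⟩

end Helpers

set_option maxHeartbeats 1000000 in
/-- error bound for the single-pass approximation
    ‖T − T̃‖₂ ≤ 2ε·√κ(B)·σ_max(Ω)²/σ_min(F)² = 2ε·√κ(B)·‖Ω‖₂²·‖F⁻¹‖₂². -/
theorem statement7 {n r : ℕ} (A B : Matrix (Fin n) (Fin n) ℂ)
    (hA : A.IsHermitian) (hB : B.PosDef)
    (Q : Matrix (Fin n) (Fin r) ℂ) (hQ : Qᴴ * B * Q = 1)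
    (ε : ℝ) (hε : 0 ≤ ε)
    (hlow : matBnorm B (A - (B * Q) * (Qᴴ * A * Q) * (B * Q)ᴴ) ≤ 2 * ε)
    (Ω : Matrix (Fin n) (Fin r) ℂ) (hF : IsUnit (Qᴴ * B * Ω)) :
    specNorm ((Qᴴ * A * Q) -
        ((Qᴴ * B * Ω)ᴴ)⁻¹ * (Ωᴴ * A * Ω) * (Qᴴ * B * Ω)⁻¹) ≤
      2 * ε * Real.sqrt (specNorm B * specNorm B⁻¹) * specNorm Ω ^ 2 *
        specNorm (Qᴴ * B * Ω)⁻¹ ^ 2 := by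
  have hBH : Bᴴ = B := hB.1
  have hFdet : IsUnit (Qᴴ * B * Ω).det := (Matrix.isUnit_iff_isUnit_det _).mp hF
  have hFHdet : IsUnit ((Qᴴ * B * Ω)ᴴ).det := by
    rw [Matrix.det_conjTranspose]; exact hFdet.star
  -- the structural identity
  have h1 : Ωᴴ * (A - (B * Q) * (Qᴴ * A * Q) * (B * Q)ᴴ) * Ω
      = Ωᴴ * A * Ω - (Qᴴ * B * Ω)ᴴ * (Qᴴ * A * Q) * (Qᴴ * B * Ω) := by
    simp only [Matrix.sub_mul, Matrix.mul_sub, Matrix.conjTranspose_mul,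
      Matrix.conjTranspose_conjTranspose, hBH, Matrix.mul_assoc]
  have h2 : ((Qᴴ * B * Ω)ᴴ)⁻¹ * ((Qᴴ * B * Ω)ᴴ * (Qᴴ * A * Q) * (Qᴴ * B * Ω)) *
      (Qᴴ * B * Ω)⁻¹ = Qᴴ * A * Q := by
    calc ((Qᴴ * B * Ω)ᴴ)⁻¹ * ((Qᴴ * B * Ω)ᴴ * (Qᴴ * A * Q) * (Qᴴ * B * Ω)) * (Qᴴ * B * Ω)⁻¹
        = (((Qᴴ * B * Ω)ᴴ)⁻¹ * (Qᴴ * B * Ω)ᴴ) * ((Qᴴ * A * Q) *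
            ((Qᴴ * B * Ω) * (Qᴴ * B * Ω)⁻¹)) := by
          simp only [Matrix.mul_assoc]
      _ = Qᴴ * A * Q := by
          rw [Matrix.nonsing_inv_mul _ hFHdet, Matrix.mul_nonsing_inv _ hFdet,
            Matrix.one_mul, Matrix.mul_one]
  have hID : (Qᴴ * A * Q) - ((Qᴴ * B * Ω)ᴴ)⁻¹ * (Ωᴴ * A * Ω) * (Qᴴ * B * Ω)⁻¹
      = -(((Qᴴ * B * Ω)ᴴ)⁻¹ *
          (Ωᴴ * (A - (B * Q) * (Qᴴ * A * Q) * (B * Q)ᴴ) * Ω) * (Qᴴ * B * Ω)⁻¹) := by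
    rw [h1, Matrix.mul_sub, Matrix.sub_mul, h2, neg_sub]
  -- norm bounds
  have hEb : ‖A - (B * Q) * (Qᴴ * A * Q) * (B * Q)ᴴ‖ ≤
      2 * ε * Real.sqrt (‖B‖ * ‖B⁻¹‖) := by
    have hk := specNorm_le_kappa_matBnorm hB (A - (B * Q) * (Qᴴ * A * Q) * (B * Q)ᴴ)
    simp only [specNorm_eq] at hk
    have hknn : (0 : ℝ) ≤ Real.sqrt (‖B‖ * ‖B⁻¹‖) := Real.sqrt_nonneg _
    calc ‖A - (B * Q) * (Qᴴ * A * Q) * (B * Q)ᴴ‖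
        ≤ Real.sqrt (‖B‖ * ‖B⁻¹‖) * matBnorm B (A - (B * Q) * (Qᴴ * A * Q) * (B * Q)ᴴ) := hk
      _ ≤ Real.sqrt (‖B‖ * ‖B⁻¹‖) * (2 * ε) := mul_le_mul_of_nonneg_left hlow hknn
      _ = 2 * ε * Real.sqrt (‖B‖ * ‖B⁻¹‖) := by ring
  have hFHinv : ‖((Qᴴ * B * Ω)ᴴ)⁻¹‖ = ‖(Qᴴ * B * Ω)⁻¹‖ := by
    rw [← Matrix.conjTranspose_nonsing_inv, Matrix.l2_opNorm_conjTranspose]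
  simp only [specNorm_eq]
  rw [hID, norm_neg]
  set F : Matrix (Fin r) (Fin r) ℂ := Qᴴ * B * Ω with hFdef
  set E : Matrix (Fin n) (Fin n) ℂ := A - (B * Q) * (Qᴴ * A * Q) * (B * Q)ᴴ with hEdef
  calc ‖(Fᴴ)⁻¹ * (Ωᴴ * E * Ω) * F⁻¹‖
      ≤ ‖(Fᴴ)⁻¹ * (Ωᴴ * E * Ω)‖ * ‖F⁻¹‖ := Matrix.l2_opNorm_mul _ _
    _ ≤ (‖(Fᴴ)⁻¹‖ * ‖Ωᴴ * E * Ω‖) * ‖F⁻¹‖ :=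
        mul_le_mul_of_nonneg_right (Matrix.l2_opNorm_mul _ _) (norm_nonneg _)
    _ = ‖Ωᴴ * E * Ω‖ * (‖F⁻¹‖ * ‖F⁻¹‖) := by rw [hFHinv]; ring
    _ ≤ (‖Ωᴴ * E‖ * ‖Ω‖) * (‖F⁻¹‖ * ‖F⁻¹‖) :=
        mul_le_mul_of_nonneg_right (Matrix.l2_opNorm_mul _ _) (by positivity)
    _ ≤ ((‖Ωᴴ‖ * ‖E‖) * ‖Ω‖) * (‖F⁻¹‖ * ‖F⁻¹‖) :=
        mul_le_mul_of_nonneg_right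
          (mul_le_mul_of_nonneg_right (Matrix.l2_opNorm_mul _ _) (norm_nonneg _))
          (by positivity)
    _ = ‖E‖ * (‖Ω‖ * ‖Ω‖ * (‖F⁻¹‖ * ‖F⁻¹‖)) := by
        rw [Matrix.l2_opNorm_conjTranspose]; ring
    _ ≤ (2 * ε * Real.sqrt (‖B‖ * ‖B⁻¹‖)) * (‖Ω‖ * ‖Ω‖ * (‖F⁻¹‖ * ‖F⁻¹‖)) :=
        mul_le_mul_of_nonneg_right hEb (by positivity)
    _ = 2 * ε * Real.sqrt (‖B‖ * ‖B⁻¹‖) * ‖Ω‖ ^ 2 * ‖F⁻¹‖ ^ 2 := by ring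
end
end

section
/- Let A ∈ ℂ^{n×n} be Hermitian and B ∈ ℂ^{n×n} be Hermitian positive definite. Let ũ ∈ ℂⁿ with ‖ũ‖_B = 1, let λ̃ ∈ ℝ, and let r = Aũ − λ̃Bũ. Then there exists a generalized eigenvalue λ of the pencil (A, B) such that |λ − λ̃| ≤ ‖r‖_{B⁻¹}; i.e., min over the generalized eigenvalues λ_i of |λ_i − λ̃| is at most ‖r‖_{B⁻¹}. -/
open Matrix ComplexOrder

noncomputable section

/-- Helper: star (M x) ⬝ y = star x ⬝ (Mᴴ y). -/
lemma starDot14 {m : Type*} [Fintype m] (M : Matrix m m ℂ) (x y : m → ℂ) :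
    star (M *ᵥ x) ⬝ᵥ y = star x ⬝ᵥ (Mᴴ *ᵥ y) := by
  rw [star_mulVec, ← dotProduct_mulVec]

/-- Helper: real part of ⟨x,x⟩ is sum of squared norms. -/
lemma dotSelfRe14 {m : Type*} [Fintype m] (x : m → ℂ) :
    (star x ⬝ᵥ x).re = ∑ i, ‖x i‖ ^ 2 := by
  rw [dotProduct, Complex.re_sum]
  refine Finset.sum_congr rfl fun i _ => ?_
  simp [Complex.normSq_eq_norm_sq, ← Complex.normSq_eq_norm_sq, Complex.mul_re, Complex.normSq_apply]

/-- there is a generalized eigenvalue of the pencil (A,B) (an eigenvalue of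
    the Hermitian matrix B^{-1/2}AB^{-1/2}, with S = B^{1/2} the Hermitian positive
    definite square root of B) within ‖r‖_{B⁻¹} of λ̃, where r = Aũ − λ̃Bũ and ‖ũ‖_B = 1. -/
theorem statement14 {n : ℕ} (A B S : Matrix (Fin n) (Fin n) ℂ)
    (hA : A.IsHermitian) (hB : B.PosDef) (hS : S.PosDef) (hSS : S * S = B)
    (u : Fin n → ℂ) (hu : vecBnorm B u = 1) (lam : ℝ)
    (hG : (S⁻¹ * A * S⁻¹).IsHermitian) :
    ∃ i : Fin n, |hG.eigenvalues i - lam| ≤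
      vecBnorm B⁻¹ (A *ᵥ u - (lam : ℂ) • (B *ᵥ u)) := by
  -- basic invertibility facts
  have hSdet : IsUnit S.det := (Matrix.isUnit_iff_isUnit_det S).mp hS.isUnit
  have hS1 : S⁻¹ * S = 1 := nonsing_inv_mul S hSdet
  have hSinvH : (S⁻¹)ᴴ = S⁻¹ := hS.isHermitian.inv
  have hBinv : B⁻¹ = S⁻¹ * S⁻¹ := by rw [← hSS, Matrix.mul_inv_rev]
  set U : Matrix (Fin n) (Fin n) ℂ := (hG.eigenvectorUnitary : Matrix (Fin n) (Fin n) ℂ) with hUdef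
  have hUU : star U * U = 1 := (Matrix.mem_unitaryGroup_iff').mp hG.eigenvectorUnitary.2
  have hUU' : U * star U = 1 := (Matrix.mem_unitaryGroup_iff).mp hG.eigenvectorUnitary.2
  set v : Fin n → ℂ := S *ᵥ u with hv
  set c : Fin n → ℂ := star U *ᵥ v with hc
  set r : Fin n → ℂ := A *ᵥ u - (lam : ℂ) • (B *ᵥ u) with hr
  -- norm preservation under U
  have hUnorm : ∀ x : Fin n → ℂ, star (U *ᵥ x) ⬝ᵥ (U *ᵥ x) = star x ⬝ᵥ x := by
    intro x
    rw [starDot14, mulVec_mulVec, ← Matrix.star_eq_conjTranspose, hUU, one_mulVec]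
  -- c has unit euclidean norm
  have hstarU : (star U)ᴴ * star U = 1 := by
    rw [← Matrix.star_eq_conjTranspose, star_star, hUU']
  have hcv : star c ⬝ᵥ c = star v ⬝ᵥ v := by
    rw [hc, starDot14, mulVec_mulVec, hstarU, one_mulVec]
  have hvu : star v ⬝ᵥ v = star u ⬝ᵥ B *ᵥ u := by
    rw [hv, starDot14, mulVec_mulVec, hS.isHermitian.eq, hSS]
  have hc1 : ∑ i, ‖c i‖ ^ 2 = 1 := by
    rw [← dotSelfRe14, hcv, hvu]
    have := hu
    rw [vecBnorm, Real.sqrt_eq_one] at this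
    exact this
  -- v = U c
  have hvUc : v = U *ᵥ c := by
    rw [hc, mulVec_mulVec, hUU', one_mulVec]
  -- the vector w in the eigenbasis
  set w : Fin n → ℂ := fun i => ((hG.eigenvalues i : ℂ) - (lam : ℂ)) * c i with hw
  -- S⁻¹ r = U w
  have hSr : S⁻¹ *ᵥ r = U *ᵥ w := by
    have hGS : (S⁻¹ * A * S⁻¹) * S = S⁻¹ * A := by
      rw [mul_assoc, hS1, mul_one]
    have hSB : S⁻¹ * B = S := by
      rw [← hSS, ← mul_assoc, hS1, one_mul]
    have h1 : S⁻¹ *ᵥ (A *ᵥ u) = (S⁻¹ * A * S⁻¹) *ᵥ v := by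
      rw [hv, mulVec_mulVec, mulVec_mulVec, hGS]
    have h2 : S⁻¹ *ᵥ (B *ᵥ u) = v := by
      rw [hv, mulVec_mulVec, hSB]
    have hspec : (S⁻¹ * A * S⁻¹) *ᵥ v = U *ᵥ (diagonal (RCLike.ofReal ∘ hG.eigenvalues) *ᵥ c) := by
      conv_lhs => rw [hG.spectral_theorem, Unitary.conjStarAlgAut_apply]
      rw [← mulVec_mulVec, ← mulVec_mulVec, ← hUdef, ← hc]
    rw [hr, mulVec_sub, mulVec_smul, h1, h2, hspec, hvUc, ← mulVec_smul, ← mulVec_sub]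
    have hvecs : (diagonal (RCLike.ofReal ∘ hG.eigenvalues) *ᵥ c - (lam : ℂ) • c) = w := by
      funext i
      simp [mulVec_diagonal, hw, sub_mul, Pi.sub_apply, Pi.smul_apply, smul_eq_mul]
    rw [hvecs]
  -- the residual norm squared
  have hrnorm : (star r ⬝ᵥ B⁻¹ *ᵥ r).re = ∑ i, ‖w i‖ ^ 2 := by
    have : star r ⬝ᵥ B⁻¹ *ᵥ r = star (S⁻¹ *ᵥ r) ⬝ᵥ (S⁻¹ *ᵥ r) := by
      rw [starDot14, hSinvH, mulVec_mulVec, ← hBinv]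
    rw [this, hSr, hUnorm, dotSelfRe14]
  -- pointwise norm of w
  have hwnorm : ∀ i, ‖w i‖ ^ 2 = |hG.eigenvalues i - lam| ^ 2 * ‖c i‖ ^ 2 := by
    intro i
    show ‖((hG.eigenvalues i : ℂ) - (lam : ℂ)) * c i‖ ^ 2 = _
    have : ((hG.eigenvalues i : ℂ) - (lam : ℂ)) = ((hG.eigenvalues i - lam : ℝ) : ℂ) := by
      push_cast; ring
    rw [this, norm_mul, Complex.norm_real, Real.norm_eq_abs, mul_pow]
  -- n is positive
  have hne : (Finset.univ : Finset (Fin n)).Nonempty := by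
    by_contra h
    rw [Finset.not_nonempty_iff_eq_empty] at h
    rw [h, Finset.sum_empty] at hc1
    norm_num at hc1
  obtain ⟨i, -, hi⟩ := Finset.exists_min_image Finset.univ
    (fun j => |hG.eigenvalues j - lam|) hne
  refine ⟨i, ?_⟩
  unfold vecBnorm
  rw [hrnorm, Real.le_sqrt (abs_nonneg _) (Finset.sum_nonneg fun j _ => sq_nonneg _)]
  calc |hG.eigenvalues i - lam| ^ 2
      = ∑ j, |hG.eigenvalues i - lam| ^ 2 * ‖c j‖ ^ 2 := by
        rw [← Finset.mul_sum, hc1, mul_one]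
    _ ≤ ∑ j, |hG.eigenvalues j - lam| ^ 2 * ‖c j‖ ^ 2 := by
        refine Finset.sum_le_sum fun j _ => ?_
        exact mul_le_mul_of_nonneg_right
          (pow_le_pow_left₀ (abs_nonneg _) (hi j (Finset.mem_univ j)) 2)
          (sq_nonneg _)
    _ = ∑ j, ‖w j‖ ^ 2 := by
        refine Finset.sum_congr rfl fun j _ => (hwnorm j).symm
end
end

section
/- Let A ∈ ℂ^{n×n} be Hermitian and B ∈ ℂ^{n×n} be Hermitian positive definite. Let ũ ∈ ℂⁿ satisfy ũ*Bũ = 1, set λ̃ = ũ*Aũ (the Rayleigh quotient, a real number) and r = Aũ − λ̃Bũ. Let λ be a generalized eigenvalue of the pencil (A, B) at minimal distance from λ̃, and suppose δ := min{ |λ̃ − λ_i| : λ_i a generalized eigenvalue of (A,B) with λ_i ≠ λ } is positive. Then |λ − λ̃| ≤ ‖r‖_{B⁻¹}² / δ. -/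
open Matrix ComplexOrder

noncomputable section

lemma kato_real {n : ℕ} (lam p : Fin n → ℝ) (hp : ∀ i, 0 ≤ p i)
    (h1 : ∑ i, p i = 1) (t a b : ℝ) (ha : a ≤ t) (hb : t ≤ b)
    (hsum : ∑ i, lam i * p i = t)
    (hsep : ∀ i, lam i ≤ a ∨ b ≤ lam i) :
    (b - t) * (t - a) ≤ ∑ i, (lam i - t) ^ 2 * p i := by
  have h0 : ∑ i, (lam i - t) * p i = 0 := by
    have : ∑ i, (lam i - t) * p i = (∑ i, lam i * p i) - t * ∑ i, p i := by
      rw [Finset.mul_sum, ← Finset.sum_sub_distrib]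
      exact Finset.sum_congr rfl fun i _ => by ring
    rw [this, hsum, h1]; ring
  have hge : 0 ≤ ∑ i, (lam i - a) * (lam i - b) * p i := by
    apply Finset.sum_nonneg
    intro i _
    rcases hsep i with h | h
    · have h2 : (lam i - a) * (lam i - b) = (a - lam i) * (b - lam i) := by ring
      rw [h2]
      exact mul_nonneg (mul_nonneg (by linarith) (by linarith)) (hp i)
    · exact mul_nonneg (mul_nonneg (by linarith) (by linarith)) (hp i)
  have expand : ∑ i, (lam i - a) * (lam i - b) * p i =
      (∑ i, (lam i - t) ^ 2 * p i) + (2 * t - a - b) * (∑ i, (lam i - t) * p i)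
        + (t - a) * (t - b) * (∑ i, p i) := by
    rw [Finset.mul_sum, Finset.mul_sum, ← Finset.sum_add_distrib, ← Finset.sum_add_distrib]
    exact Finset.sum_congr rfl fun i _ => by ring
  rw [h0, h1] at expand
  nlinarith [hge, expand]

lemma dot_conj {m : Type*} [Fintype m] (M N : Matrix m m ℂ) (x y : m → ℂ) :
    star (M *ᵥ x) ⬝ᵥ (N *ᵥ y) = star x ⬝ᵥ (Mᴴ * N) *ᵥ y := by
  rw [star_mulVec, dotProduct_mulVec, vecMul_vecMul, dotProduct_mulVec]

theorem statement15' {n : ℕ} (A B S : Matrix (Fin n) (Fin n) ℂ)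
    (hA : A.IsHermitian) (hB : B.PosDef) (hS : S.PosDef) (hSS : S * S = B)
    (u : Fin n → ℂ) (hu : star u ⬝ᵥ B *ᵥ u = 1)
    (tlam : ℝ) (htlam : (tlam : ℂ) = star u ⬝ᵥ A *ᵥ u)
    (hG : (S⁻¹ * A * S⁻¹).IsHermitian)
    (i₀ : Fin n) (hmin : ∀ i, |hG.eigenvalues i₀ - tlam| ≤ |hG.eigenvalues i - tlam|)
    (δ : ℝ) (hδpos : 0 < δ)
    (hδ : ∀ i, hG.eigenvalues i ≠ hG.eigenvalues i₀ → δ ≤ |tlam - hG.eigenvalues i|) :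
    |hG.eigenvalues i₀ - tlam| ≤
      Real.sqrt (star (A *ᵥ u - (tlam : ℂ) • (B *ᵥ u)) ⬝ᵥ
        B⁻¹ *ᵥ (A *ᵥ u - (tlam : ℂ) • (B *ᵥ u))).re ^ 2 / δ := by
  -- basic invertibility facts
  have hSdet : IsUnit S.det := (isUnit_iff_isUnit_det S).1 hS.isUnit
  have hSinvS : S⁻¹ * S = 1 := nonsing_inv_mul S hSdet
  have hSSinv : S * S⁻¹ = 1 := mul_nonsing_inv S hSdet
  have hSH : Sᴴ = S := hS.1
  have hSinvH : S⁻¹ᴴ = S⁻¹ := by rw [conjTranspose_nonsing_inv, hSH]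
  have hBinv : B⁻¹ = S⁻¹ * S⁻¹ := by rw [← hSS, Matrix.mul_inv_rev]
  -- unitary facts
  set lam := hG.eigenvalues with hlam
  set U : Matrix (Fin n) (Fin n) ℂ := (hG.eigenvectorUnitary : Matrix (Fin n) (Fin n) ℂ)
    with hUdef
  have hU1 : star U * U = 1 := (mem_unitaryGroup_iff').1 (hG.eigenvectorUnitary).2
  have hU2 : U * star U = 1 := (mem_unitaryGroup_iff).1 (hG.eigenvectorUnitary).2
  have hUH : Uᴴ = star U := rfl
  set D : Matrix (Fin n) (Fin n) ℂ := diagonal (RCLike.ofReal ∘ lam) with hDdef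
  have hspec : S⁻¹ * A * S⁻¹ = U * D * star U := hG.spectral_theorem
  -- vectors
  set v : Fin n → ℂ := S *ᵥ u with hvdef
  set c : Fin n → ℂ := star U *ᵥ v with hcdef
  have hvc : v = U *ᵥ c := by
    rw [hcdef, mulVec_mulVec, hU2, one_mulVec]
  set d : Fin n → ℂ := fun i => ((lam i : ℝ) - tlam : ℝ) • c i with hddef
  set p : Fin n → ℝ := fun i => Complex.normSq (c i) with hpdef
  have hp : ∀ i, 0 ≤ p i := fun i => Complex.normSq_nonneg _
  -- star c ⬝ᵥ c = 1
  have hcc : star c ⬝ᵥ c = 1 := by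
    have h1 : star c ⬝ᵥ c = star v ⬝ᵥ v := by
      rw [hvc, dot_conj U U c c, hUH, hU1, one_mulVec]
    have h2 : star v ⬝ᵥ v = star u ⬝ᵥ B *ᵥ u := by
      have := dot_conj S S u u
      rw [hvdef, this, hSH, hSS]
    rw [h1, h2, hu]
  -- G v = U (D c)
  have hGv : (S⁻¹ * A * S⁻¹) *ᵥ v = U *ᵥ (D *ᵥ c) := by
    rw [hspec, hcdef]
    simp only [mulVec_mulVec]
    rw [Matrix.mul_assoc]
  -- tlam = star c ⬝ᵥ D c
  have htc : (tlam : ℂ) = star c ⬝ᵥ D *ᵥ c := by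
    have hAeq : Sᴴ * ((S⁻¹ * A * S⁻¹) * S) = A := by
      rw [hSH]
      simp only [Matrix.mul_assoc]
      rw [hSinvS, mul_one, ← Matrix.mul_assoc, hSSinv, one_mul]
    have h1 : star v ⬝ᵥ (S⁻¹ * A * S⁻¹) *ᵥ v = star u ⬝ᵥ A *ᵥ u := by
      rw [hvdef, mulVec_mulVec, dot_conj S ((S⁻¹ * A * S⁻¹) * S) u u, hAeq]
    have h2 : star v ⬝ᵥ (S⁻¹ * A * S⁻¹) *ᵥ v = star c ⬝ᵥ D *ᵥ c := by
      rw [hGv, hvc, dot_conj U U c (D *ᵥ c), hUH, hU1, one_mulVec]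
    rw [htlam, ← h1, h2]
  -- residual
  set r : Fin n → ℂ := A *ᵥ u - (tlam : ℂ) • (B *ᵥ u) with hrdef
  have hSr : S⁻¹ *ᵥ r = U *ᵥ d := by
    have h1 : S⁻¹ *ᵥ (B *ᵥ u) = v := by
      rw [← hSS, hvdef]
      simp only [mulVec_mulVec]
      rw [← Matrix.mul_assoc, hSinvS, one_mul]
    have h2 : S⁻¹ *ᵥ (A *ᵥ u) = (S⁻¹ * A * S⁻¹) *ᵥ v := by
      rw [hvdef]
      simp only [mulVec_mulVec]
      rw [Matrix.mul_assoc (S⁻¹ * A), hSinvS, mul_one]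
    rw [hrdef, mulVec_sub, mulVec_smul, h1, h2, hGv, hvc, ← mulVec_smul, ← mulVec_sub]
    have h3 : D *ᵥ c - (tlam : ℂ) • c = d := by
      funext i
      simp [hddef, hDdef, mulVec_diagonal, Function.comp, Complex.real_smul,
        Complex.ofReal_sub, smul_eq_mul]
      ring
    rw [h3]
  have hrB : star r ⬝ᵥ B⁻¹ *ᵥ r = star d ⬝ᵥ d := by
    have h1 : star r ⬝ᵥ B⁻¹ *ᵥ r = star (S⁻¹ *ᵥ r) ⬝ᵥ (S⁻¹ *ᵥ r) := by
      rw [dot_conj S⁻¹ S⁻¹ r r, hSinvH, hBinv]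
    rw [h1, hSr, dot_conj U U d d, hUH, hU1, one_mulVec]
  -- scalar sums
  have hsum1 : ∑ i, p i = 1 := by
    have h1 : star c ⬝ᵥ c = ((∑ i, p i : ℝ) : ℂ) := by
      rw [dotProduct]
      push_cast
      refine Finset.sum_congr rfl fun i _ => ?_
      simp [hpdef, Pi.star_apply, Complex.star_def, Complex.normSq_eq_conj_mul_self]
    rw [h1] at hcc
    exact_mod_cast hcc
  have hsum2 : ∑ i, lam i * p i = tlam := by
    have h1 : star c ⬝ᵥ D *ᵥ c = ((∑ i, lam i * p i : ℝ) : ℂ) := by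
      rw [dotProduct]
      push_cast
      refine Finset.sum_congr rfl fun i _ => ?_
      simp [hpdef, hDdef, mulVec_diagonal, Function.comp, Pi.star_apply, Complex.star_def,
        Complex.normSq_eq_conj_mul_self]
      ring
    rw [h1] at htc
    exact_mod_cast htc.symm
  have hsum3 : star d ⬝ᵥ d = ((∑ i, (lam i - tlam) ^ 2 * p i : ℝ) : ℂ) := by
    rw [dotProduct]
    push_cast
    refine Finset.sum_congr rfl fun i _ => ?_
    simp [hddef, hpdef, Pi.star_apply, Complex.star_def, Complex.normSq_eq_conj_mul_self,
      smul_eq_mul]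
    push_cast
    ring
  set R : ℝ := ∑ i, (lam i - tlam) ^ 2 * p i with hRdef
  have hRnonneg : 0 ≤ R :=
    Finset.sum_nonneg fun i _ => mul_nonneg (sq_nonneg _) (hp i)
  have hre : (star r ⬝ᵥ B⁻¹ *ᵥ r).re = R := by
    rw [hrB, hsum3, Complex.ofReal_re]
  rw [hre, Real.sq_sqrt hRnonneg]
  -- final real inequality
  rw [le_div_iff₀ hδpos]
  have hsep : ∀ (a b : ℝ), a ≤ tlam → tlam ≤ b → (∀ i, lam i ≤ a ∨ b ≤ lam i) →
      (b - tlam) * (tlam - a) ≤ R :=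
    fun a b ha hb hs => kato_real lam p hp hsum1 tlam a b ha hb hsum2 hs
  rcases le_total (lam i₀) tlam with hcase | hcase
  · have hs : ∀ i, lam i ≤ lam i₀ ∨ tlam + δ ≤ lam i := by
      intro i
      by_cases he : lam i = lam i₀
      · exact Or.inl he.le
      · have hm := hmin i
        have hd := hδ i he
        rw [abs_sub_comm tlam] at hd
        by_contra hcon
        push_neg at hcon
        obtain ⟨hc1, hc2⟩ := hcon
        rcases abs_cases (lam i - tlam) with ⟨e1, e2⟩ | ⟨e1, e2⟩ <;>
          rcases abs_cases (lam i₀ - tlam) with ⟨f1, f2⟩ | ⟨f1, f2⟩ <;>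
          rw [e1] at hm hd <;> rw [f1] at hm <;> linarith
    have hK := hsep (lam i₀) (tlam + δ) hcase (by linarith) hs
    rw [abs_of_nonpos (by linarith)]
    nlinarith
  · have hs : ∀ i, lam i ≤ tlam - δ ∨ lam i₀ ≤ lam i := by
      intro i
      by_cases he : lam i = lam i₀
      · exact Or.inr he.ge
      · have hm := hmin i
        have hd := hδ i he
        rw [abs_sub_comm tlam] at hd
        by_contra hcon
        push_neg at hcon
        obtain ⟨hc1, hc2⟩ := hcon
        rcases abs_cases (lam i - tlam) with ⟨e1, e2⟩ | ⟨e1, e2⟩ <;>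
          rcases abs_cases (lam i₀ - tlam) with ⟨f1, f2⟩ | ⟨f1, f2⟩ <;>
          rw [e1] at hm hd <;> rw [f1] at hm <;> linarith
    have hK := hsep (tlam - δ) (lam i₀) (by linarith) hcase hs
    rw [abs_of_nonneg (by linarith)]
    nlinarith

/-- Kato–Temple type bound.  λ̃ = ũ*Aũ is the Rayleigh quotient of the
    B-normalized vector ũ, λ = (eigenvalues of B^{-1/2}AB^{-1/2} =: G) i₀ is a generalized
    eigenvalue of (A,B) at minimal distance from λ̃, and δ > 0 is the gap to the other
    generalized eigenvalues. Then |λ − λ̃| ≤ ‖r‖_{B⁻¹}²/δ. -/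
theorem statement15 {n : ℕ} (A B S : Matrix (Fin n) (Fin n) ℂ)
    (hA : A.IsHermitian) (hB : B.PosDef) (hS : S.PosDef) (hSS : S * S = B)
    (u : Fin n → ℂ) (hu : star u ⬝ᵥ B *ᵥ u = 1)
    (tlam : ℝ) (htlam : (tlam : ℂ) = star u ⬝ᵥ A *ᵥ u)
    (hG : (S⁻¹ * A * S⁻¹).IsHermitian)
    (i₀ : Fin n) (hmin : ∀ i, |hG.eigenvalues i₀ - tlam| ≤ |hG.eigenvalues i - tlam|)
    (δ : ℝ) (hδpos : 0 < δ)
    (hδ : ∀ i, hG.eigenvalues i ≠ hG.eigenvalues i₀ → δ ≤ |tlam - hG.eigenvalues i|) :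
    |hG.eigenvalues i₀ - tlam| ≤
      vecBnorm B⁻¹ (A *ᵥ u - (tlam : ℂ) • (B *ᵥ u)) ^ 2 / δ := by
  have h := statement15' A B S hA hB hS hSS u hu tlam htlam hG i₀ hmin δ hδpos hδ
  simpa [vecBnorm] using h
end
end

section
/- Let A ∈ ℂ^{n×n} be Hermitian and B ∈ ℂ^{n×n} be Hermitian positive definite. Let ũ ∈ ℂⁿ with ‖ũ‖_B = 1, let λ̃ ∈ ℝ, and let r = Aũ − λ̃Bũ. Let λ be a simple generalized eigenvalue of the pencil (A, B) (i.e., of multiplicity one) with B-normalized eigenvector u satisfying Au = λBu and ‖u‖_B = 1, and suppose δ := min{ |λ̃ − λ_i| : λ_i a generalized eigenvalue of (A,B) with λ_i ≠ λ } is positive. Then the sine of the B-angle between u and ũ satisfies √(1 − |⟨u, ũ⟩_B|²) ≤ ‖r‖_{B⁻¹} / δ. -/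
open Matrix ComplexOrder

noncomputable section

lemma herm_pair {n : ℕ} {G : Matrix (Fin n) (Fin n) ℂ} (hG : G.IsHermitian) (j : Fin n) (y : Fin n → ℂ) :
    star ((WithLp.equiv 2 _) (hG.eigenvectorBasis j)) ⬝ᵥ (G *ᵥ y)
      = (hG.eigenvalues j : ℂ) * (star ((WithLp.equiv 2 _) (hG.eigenvectorBasis j)) ⬝ᵥ y) := by
  set ej := (WithLp.equiv 2 _) (hG.eigenvectorBasis j)
  have h1 : star ej ᵥ* G = hG.eigenvalues j • star ej := by
    have := congrArg star (hG.mulVec_eigenvectorBasis j)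
    rw [star_mulVec, hG.eq] at this
    rw [show ej = (hG.eigenvectorBasis j).ofLp from rfl, this, star_smul]
    norm_num
  rw [dotProduct_mulVec, h1, smul_dotProduct, Complex.real_smul]

set_option maxHeartbeats 4000000 in
/-- sin of the B-angle between the exact eigenvector u (of a simple
    generalized eigenvalue λ of (A,B), i.e. an eigenvalue of G = B^{-1/2}AB^{-1/2} of
    multiplicity one) and a B-normalized ũ is bounded by ‖r‖_{B⁻¹}/δ. -/
theorem statement16 {n : ℕ} (A B S : Matrix (Fin n) (Fin n) ℂ)
    (hA : A.IsHermitian) (hB : B.PosDef) (hS : S.PosDef) (hSS : S * S = B)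
    (tu : Fin n → ℂ) (htu : vecBnorm B tu = 1) (tlam : ℝ)
    (u : Fin n → ℂ) (hu : vecBnorm B u = 1) (lam : ℝ)
    (heig : A *ᵥ u = (lam : ℂ) • (B *ᵥ u))
    (hG : (S⁻¹ * A * S⁻¹).IsHermitian)
    (hsimple : ∃! i : Fin n, hG.eigenvalues i = lam)
    (δ : ℝ) (hδpos : 0 < δ)
    (hδ : ∀ i, hG.eigenvalues i ≠ lam → δ ≤ |tlam - hG.eigenvalues i|) :
    Real.sqrt (1 - ‖Binner B u tu‖ ^ 2) ≤
      vecBnorm B⁻¹ (A *ᵥ tu - (tlam : ℂ) • (B *ᵥ tu)) / δ := by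
  classical
  have hdet : IsUnit S.det := isUnit_iff_ne_zero.mpr hS.det_pos.ne'
  have hinvS : S⁻¹ * S = 1 := nonsing_inv_mul S hdet
  have hSH : Sᴴ = S := hS.1
  have hSiH : S⁻¹ᴴ = S⁻¹ := hS.1.inv
  have hBinv : B⁻¹ = S⁻¹ * S⁻¹ := by rw [← hSS, Matrix.mul_inv_rev]
  set G := S⁻¹ * A * S⁻¹ with hGdef
  have hGS : G * S = S⁻¹ * A := by rw [hGdef, mul_assoc, hinvS, mul_one]
  have hSiB : S⁻¹ * B = S := by rw [← hSS, ← mul_assoc, hinvS, one_mul]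
  set v : Fin n → ℂ := S *ᵥ tu with hv
  set w : Fin n → ℂ := S *ᵥ u with hw
  set eqv := (WithLp.equiv 2 (Fin n → ℂ)).symm with heqv
  -- B-dot products become euclidean dot products
  have hBdot : ∀ x y : Fin n → ℂ, star y ⬝ᵥ B *ᵥ x = star (S *ᵥ y) ⬝ᵥ (S *ᵥ x) := by
    intro x y
    rw [← hSS, ← mulVec_mulVec, dotProduct_mulVec, star_mulVec, hSH]
  have hBidot : ∀ x y : Fin n → ℂ, star y ⬝ᵥ B⁻¹ *ᵥ x = star (S⁻¹ *ᵥ y) ⬝ᵥ (S⁻¹ *ᵥ x) := by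
    intro x y
    rw [hBinv, ← mulVec_mulVec, dotProduct_mulVec, star_mulVec, hSiH]
  -- norms
  have hnorm : ∀ x : Fin n → ℂ, vecBnorm B x = ‖eqv (S *ᵥ x)‖ := by
    intro x
    rw [vecBnorm, hBdot]
    have : star (S *ᵥ x) ⬝ᵥ (S *ᵥ x) = (inner ℂ (eqv (S *ᵥ x)) (eqv (S *ᵥ x)) : ℂ) := by
      exact (dotProduct_comm _ _).trans (EuclideanSpace.inner_toLp_toLp _ _).symm
    rw [this, ← RCLike.re_to_complex, inner_self_eq_norm_sq, Real.sqrt_sq (norm_nonneg _)]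
  have hnormi : ∀ x : Fin n → ℂ, vecBnorm B⁻¹ x = ‖eqv (S⁻¹ *ᵥ x)‖ := by
    intro x
    rw [vecBnorm, hBidot]
    have : star (S⁻¹ *ᵥ x) ⬝ᵥ (S⁻¹ *ᵥ x) = (inner ℂ (eqv (S⁻¹ *ᵥ x)) (eqv (S⁻¹ *ᵥ x)) : ℂ) := by
      exact (dotProduct_comm _ _).trans (EuclideanSpace.inner_toLp_toLp _ _).symm
    rw [this, ← RCLike.re_to_complex, inner_self_eq_norm_sq, Real.sqrt_sq (norm_nonneg _)]
  set ve : EuclideanSpace ℂ (Fin n) := eqv v with hve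
  set we : EuclideanSpace ℂ (Fin n) := eqv w with hwe
  have hvnorm : ‖ve‖ = 1 := by rw [hve, ← hnorm tu]; exact htu
  have hwnorm : ‖we‖ = 1 := by rw [hwe, ← hnorm u]; exact hu
  -- eigen equation for w
  have hGw : G *ᵥ w = (lam : ℂ) • w := by
    rw [hw, mulVec_mulVec, hGS, ← mulVec_mulVec, heig, mulVec_smul, mulVec_mulVec, hSiB]
  -- residual
  set r : Fin n → ℂ := A *ᵥ tu - (tlam : ℂ) • (B *ᵥ tu) with hr
  have hres : S⁻¹ *ᵥ r = G *ᵥ v - (tlam : ℂ) • v := by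
    rw [hr, mulVec_sub, mulVec_smul, hv, mulVec_mulVec, mulVec_mulVec, mulVec_mulVec,
      hGS, hSiB]
  -- eigenbasis
  set b := hG.eigenvectorBasis with hb
  set μ := hG.eigenvalues with hμ
  obtain ⟨i₀, hi₀, huniq⟩ := hsimple
  set c : Fin n → ℂ := fun j => b.repr ve j with hc
  set d : Fin n → ℂ := fun j => b.repr we j with hd
  have hbinner : ∀ (j : Fin n) (y : Fin n → ℂ),
      (inner ℂ (b j) (eqv y) : ℂ) = star ((WithLp.equiv 2 _) (b j)) ⬝ᵥ y := by
    intro j y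
    rw [show b j = eqv ((WithLp.equiv 2 _) (b j)) from ((WithLp.equiv 2 _).symm_apply_apply _).symm]
    exact (EuclideanSpace.inner_toLp_toLp _ y).trans (dotProduct_comm _ _)
  -- d j = 0 for j ≠ i₀
  have hdzero : ∀ j, j ≠ i₀ → d j = 0 := by
    intro j hj
    have hμj : μ j ≠ lam := fun h => hj (huniq j h)
    have h1 : (μ j : ℂ) * (star ((WithLp.equiv 2 _) (b j)) ⬝ᵥ w)
        = (lam : ℂ) * (star ((WithLp.equiv 2 _) (b j)) ⬝ᵥ w) := by
      rw [← herm_pair hG j w, hGw, dotProduct_smul, smul_eq_mul]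
    have h2 : ((μ j : ℂ) - (lam : ℂ)) * (star ((WithLp.equiv 2 _) (b j)) ⬝ᵥ w) = 0 := by
      rw [sub_mul, h1, sub_self]
    have h3 : ((μ j : ℂ) - (lam : ℂ)) ≠ 0 := by
      simp only [ne_eq, sub_eq_zero]
      exact_mod_cast hμj
    have h4 : star ((WithLp.equiv 2 _) (b j)) ⬝ᵥ w = 0 := by
      rcases mul_eq_zero.mp h2 with h | h
      · exact absurd h h3
      · exact h
    rw [hd]
    simp only [b.repr_apply_apply, hwe, hbinner j w, h4]
  -- Parseval for inner products
  have hparseval : ∀ x y : EuclideanSpace ℂ (Fin n),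
      (inner ℂ x y : ℂ) = ∑ j, (starRingEnd ℂ) (b.repr x j) * (b.repr y j) := by
    intro x y
    rw [← b.repr.inner_map_map x y, PiLp.inner_apply]
    simp [RCLike.inner_apply]
    exact Finset.sum_congr rfl fun _ _ => mul_comm _ _
  have hBin : Binner B u tu = inner ℂ ve we := by
    rw [Binner, hBdot, ← hv, ← hw, hve, hwe]; exact (dotProduct_comm _ _).trans (EuclideanSpace.inner_toLp_toLp _ _).symm
  have hinvw : (inner ℂ ve we : ℂ) = (starRingEnd ℂ) (c i₀) * d i₀ := by
    rw [hparseval ve we, Finset.sum_eq_single i₀]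
    · intro j _ hj; rw [show b.repr we j = d j from rfl, hdzero j hj, mul_zero]
    · intro h; exact absurd (Finset.mem_univ i₀) h
  have hdnorm : ‖d i₀‖ = 1 := by
    have h1 : (inner ℂ we we : ℂ) = (starRingEnd ℂ) (d i₀) * d i₀ := by
      rw [hparseval we we, Finset.sum_eq_single i₀]
      · intro j _ hj; rw [show b.repr we j = d j from rfl, hdzero j hj, mul_zero]
      · intro h; exact absurd (Finset.mem_univ i₀) h
    have h2 : (inner ℂ we we : ℂ) = (‖we‖ : ℂ) ^ 2 := inner_self_eq_norm_sq_to_K we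
    rw [hwnorm] at h2
    have h3 : (starRingEnd ℂ) (d i₀) * d i₀ = 1 := by rw [← h1, h2]; norm_num
    have h5 : ((Complex.normSq (d i₀) : ℂ)) = 1 :=
      (Complex.normSq_eq_conj_mul_self (z := d i₀)).trans h3
    have h4 : Complex.normSq (d i₀) = 1 := by exact_mod_cast h5
    have h6 : ‖d i₀‖ ^ 2 = 1 := by rw [Complex.sq_norm, h4]
    nlinarith [norm_nonneg (d i₀)]
  have hBnorm : ‖Binner B u tu‖ = ‖c i₀‖ := by
    rw [hBin, hinvw, norm_mul, RCLike.norm_conj, hdnorm, mul_one]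
  -- residual coordinates
  set ρ : EuclideanSpace ℂ (Fin n) := eqv (S⁻¹ *ᵥ r) with hρ
  have hρcoord : ∀ j, b.repr ρ j = ((μ j : ℂ) - (tlam : ℂ)) * c j := by
    intro j
    rw [hρ, b.repr_apply_apply, hres, hbinner j]
    rw [dotProduct_sub, herm_pair hG j v, dotProduct_smul, smul_eq_mul, sub_mul]
    rw [hc]
    simp only [b.repr_apply_apply, hve, hbinner j v]
    rfl
  -- Parseval norms
  have hsumnorm : ∀ x : EuclideanSpace ℂ (Fin n), ‖x‖ ^ 2 = ∑ j, ‖b.repr x j‖ ^ 2 := by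
    intro x
    rw [← b.repr.norm_map x, EuclideanSpace.norm_eq,
      Real.sq_sqrt (Finset.sum_nonneg fun j _ => sq_nonneg _)]
  have hsumc : ∑ j, ‖c j‖ ^ 2 = 1 := by
    have h := hsumnorm ve
    rw [hvnorm] at h
    simpa using h.symm
  -- key inequality
  have hkey : δ ^ 2 * (1 - ‖c i₀‖ ^ 2) ≤ ‖ρ‖ ^ 2 := by
    rw [hsumnorm ρ]
    have hsum' : ∑ j ∈ Finset.univ.erase i₀, ‖c j‖ ^ 2 = 1 - ‖c i₀‖ ^ 2 := by
      rw [← hsumc, eq_sub_iff_add_eq, Finset.sum_erase_add _ _ (Finset.mem_univ i₀)]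
    calc δ ^ 2 * (1 - ‖c i₀‖ ^ 2) = ∑ j ∈ Finset.univ.erase i₀, δ ^ 2 * ‖c j‖ ^ 2 := by
            rw [← Finset.mul_sum, hsum']
      _ ≤ ∑ j ∈ Finset.univ.erase i₀, ‖b.repr ρ j‖ ^ 2 := by
            apply Finset.sum_le_sum
            intro j hj
            have hjne : j ≠ i₀ := Finset.ne_of_mem_erase hj
            have hμj : μ j ≠ lam := fun h => hjne (huniq j h)
            have hdel : δ ≤ |tlam - μ j| := hδ j hμj
            rw [hρcoord j, norm_mul, mul_pow]
            have h1 : ‖(μ j : ℂ) - (tlam : ℂ)‖ = |tlam - μ j| := by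
              rw [← Complex.ofReal_sub, Complex.norm_real, Real.norm_eq_abs, abs_sub_comm]
            rw [h1]
            have h2 : δ ^ 2 ≤ |tlam - μ j| ^ 2 := by
              nlinarith [abs_nonneg (tlam - μ j)]
            nlinarith [norm_nonneg (c j), sq_nonneg (‖c j‖)]
      _ ≤ ∑ j, ‖b.repr ρ j‖ ^ 2 := by
            exact Finset.sum_le_sum_of_subset_of_nonneg (Finset.erase_subset _ _)
              (fun j _ _ => sq_nonneg _)
  -- finish
  have hRHS : vecBnorm B⁻¹ r = ‖ρ‖ := hnormi r
  rw [hRHS, hBnorm]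
  have h1 : 1 - ‖c i₀‖ ^ 2 ≤ (‖ρ‖ / δ) ^ 2 := by
    rw [div_pow, le_div_iff₀ (pow_pos hδpos 2)]
    nlinarith
  calc Real.sqrt (1 - ‖c i₀‖ ^ 2) ≤ Real.sqrt ((‖ρ‖ / δ) ^ 2) := Real.sqrt_le_sqrt h1
    _ = ‖ρ‖ / δ := Real.sqrt_sq (div_nonneg (norm_nonneg _) hδpos.le)
end
end

section
/- Let M ∈ ℝ^{n×n} be symmetric positive definite. Let (Ω, P) be a probability space and ξ₁, …, ξ_N square-integrable real random variables with E[ξ_i ξ_j] = δ_{ij} (Kronecker delta) for all i, j. Let λ_k ≥ 0 and λ̃_k ≥ 0 be real numbers and φ_k, φ̃_k ∈ ℝⁿ vectors, for k = 1, …, N, satisfying: ‖φ_k‖_M = ‖φ̃_k‖_M = 1; ⟨φ_k, φ̃_k⟩_M ≥ 0; |λ_k − λ̃_k| ≤ η; and 1 − ⟨φ_k, φ̃_k⟩_M² ≤ s², where η ≥ 0 and 0 ≤ s ≤ 1. Then E[ ‖ Σ_{k=1}^{N} ξ_k(√λ_k · φ_k − √λ̃_k · φ̃_k) ‖_M² ]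 ≤ 2Nη + 4s²·Σ_{k=1}^{N} λ_k. (This is a precise form, with explicit constants, of the paper's bound on the mean-square error of the truncated Karhunen–Loève expansion computed from approximate eigenpairs.) -/
open Matrix MeasureTheory ProbabilityTheory

noncomputable section

/-- Euclidean (ℓ²) norm of a real vector. -/
def vecNorm2R {m : Type*} [Fintype m] (x : m → ℝ) : ℝ :=
  Real.sqrt (∑ i, x i ^ 2)

/-- Spectral (ℓ²-operator) norm of a real matrix. -/
def specNormR {m p : Type*} [Fintype m] [Fintype p] (M : Matrix m p ℝ) : ℝ :=
  sSup {t : ℝ | ∃ x : p → ℝ, x ≠ 0 ∧ t = vecNorm2R (M *ᵥ x) / vecNorm2R x}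

/-- The B-inner product ⟨x,y⟩_B = yᵀBx. -/
def BinnerR {m : Type*} [Fintype m] (B : Matrix m m ℝ) (x y : m → ℝ) : ℝ :=
  y ⬝ᵥ B *ᵥ x

/-- The B-norm of a real vector, ‖x‖_B = √(xᵀBx). -/
def vecBnormR {m : Type*} [Fintype m] (B : Matrix m m ℝ) (x : m → ℝ) : ℝ :=
  Real.sqrt (x ⬝ᵥ B *ᵥ x)

/-- The induced B-norm of a real matrix, ‖M‖_B = sup_{x ≠ 0} ‖Mx‖_B / ‖x‖_B. -/
def matBnormR {m : Type*} [Fintype m] (B M : Matrix m m ℝ) : ℝ :=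
  sSup {t : ℝ | ∃ x : m → ℝ, x ≠ 0 ∧ t = vecBnormR B (M *ᵥ x) / vecBnormR B x}

private lemma sum_dotProduct' {N n : ℕ} (f : Fin N → Fin n → ℝ) (w : Fin n → ℝ) :
    (∑ i, f i) ⬝ᵥ w = ∑ i, f i ⬝ᵥ w := by
  simp only [dotProduct, Finset.sum_apply, Finset.sum_mul]
  exact Finset.sum_comm

private lemma dotProduct_sum' {N n : ℕ} (w : Fin n → ℝ) (f : Fin N → Fin n → ℝ) :
    w ⬝ᵥ (∑ i, f i) = ∑ i, w ⬝ᵥ f i := by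
  simp only [dotProduct, Finset.sum_apply, Finset.mul_sum]
  exact Finset.sum_comm

private lemma mulVec_sum' {N n : ℕ} (M : Matrix (Fin n) (Fin n) ℝ) (f : Fin N → Fin n → ℝ) :
    M *ᵥ (∑ i, f i) = ∑ i, M *ᵥ f i := by
  ext j
  simp only [mulVec, dotProduct, Finset.sum_apply, Finset.mul_sum]
  exact Finset.sum_comm ..

set_option maxHeartbeats 1000000 in
/-- mean-square error of the truncated KL expansion computed from
    approximate eigenpairs: E‖Σ_k ξ_k(√λ_k φ_k − √λ̃_k φ̃_k)‖_M² ≤ 2Nη + 4s²Σ_k λ_k. -/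
theorem statement19 {n N : ℕ} (M : Matrix (Fin n) (Fin n) ℝ) (hM : M.PosDef)
    {Ω : Type*} [MeasureSpace Ω] (hP : IsProbabilityMeasure (volume : Measure Ω))
    (ξ : Fin N → Ω → ℝ) (hξ : ∀ i, MemLp (ξ i) 2 volume)
    (horth : ∀ i j, (∫ ω, ξ i ω * ξ j ω) = if i = j then (1 : ℝ) else 0)
    (lam tlam : Fin N → ℝ) (hlam : ∀ i, 0 ≤ lam i) (htlam : ∀ i, 0 ≤ tlam i)
    (φ tφ : Fin N → Fin n → ℝ)
    (hφ : ∀ i, vecBnormR M (φ i) = 1) (htφ : ∀ i, vecBnormR M (tφ i) = 1)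
    (hpos : ∀ i, 0 ≤ BinnerR M (φ i) (tφ i))
    (η : ℝ) (hη : 0 ≤ η) (hev : ∀ i, |lam i - tlam i| ≤ η)
    (s : ℝ) (hs0 : 0 ≤ s) (hs1 : s ≤ 1)
    (hang : ∀ i, 1 - BinnerR M (φ i) (tφ i) ^ 2 ≤ s ^ 2) :
    (∫ ω, vecBnormR M
        (∑ i, ξ i ω • (Real.sqrt (lam i) • φ i - Real.sqrt (tlam i) • tφ i)) ^ 2) ≤
      2 * N * η + 4 * s ^ 2 * ∑ i, lam i := by
  classical
  set v : Fin N → Fin n → ℝ :=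
    fun i => Real.sqrt (lam i) • φ i - Real.sqrt (tlam i) • tφ i with hv
  set G : Fin N → Fin N → ℝ := fun i j => (v i) ⬝ᵥ M *ᵥ (v j) with hGdef
  -- nonnegativity of the quadratic form
  have hq0 : ∀ x : Fin n → ℝ, 0 ≤ x ⬝ᵥ M *ᵥ x := fun x => by
    simpa using hM.posSemidef.re_dotProduct_nonneg x
  have hquad : ∀ x : Fin n → ℝ, vecBnormR M x ^ 2 = x ⬝ᵥ M *ᵥ x := fun x => by
    rw [vecBnormR, Real.sq_sqrt (hq0 x)]
  -- symmetry of the bilinear form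
  have hsym : ∀ x y : Fin n → ℝ, x ⬝ᵥ M *ᵥ y = y ⬝ᵥ M *ᵥ x := by
    intro x y
    have hMt : Mᵀ = M := by
      have := hM.1
      simpa [Matrix.IsHermitian, Matrix.conjTranspose_eq_transpose_of_trivial] using this
    rw [dotProduct_mulVec, dotProduct_comm, ← mulVec_transpose, hMt]
  -- pointwise expansion of the squared norm
  have hpt : ∀ ω, vecBnormR M (∑ i, ξ i ω • v i) ^ 2
      = ∑ i, ∑ j, ξ i ω * ξ j ω * G i j := by
    intro ω
    rw [hquad, mulVec_sum', sum_dotProduct']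
    refine Finset.sum_congr rfl fun i _ => ?_
    rw [dotProduct_sum']
    refine Finset.sum_congr rfl fun j _ => ?_
    rw [mulVec_smul, smul_dotProduct, dotProduct_smul, hGdef]
    simp [smul_eq_mul]; ring
  -- integrability of products
  have hintmul : ∀ i j, Integrable (fun ω => ξ i ω * ξ j ω) volume := by
    intro i j
    have : MemLp (ξ i • ξ j) 1 volume :=
      (hξ j).smul (hξ i) (hpqr := ⟨by simp [one_div, ENNReal.inv_two_add_inv_two]⟩)
    exact memLp_one_iff_integrable.mp this
  have hint : ∀ i j, Integrable (fun ω => ξ i ω * ξ j ω * G i j) volume :=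
    fun i j => (hintmul i j).mul_const _
  -- compute the integral
  have hIeq : (∫ ω, vecBnormR M (∑ i, ξ i ω • v i) ^ 2) = ∑ i, G i i := by
    calc (∫ ω, vecBnormR M (∑ i, ξ i ω • v i) ^ 2)
        = ∫ ω, ∑ i, ∑ j, ξ i ω * ξ j ω * G i j := by
          exact integral_congr_ae (Filter.Eventually.of_forall fun ω => hpt ω)
      _ = ∑ i, ∑ j, ∫ ω, ξ i ω * ξ j ω * G i j := by
          rw [integral_finset_sum _ (fun i _ => integrable_finset_sum _ (fun j _ => hint i j))]
          exact Finset.sum_congr rfl fun i _ => integral_finset_sum _ (fun j _ => hint i j)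
      _ = ∑ i, ∑ j, (if i = j then (1:ℝ) else 0) * G i j := by
          refine Finset.sum_congr rfl fun i _ => Finset.sum_congr rfl fun j _ => ?_
          rw [integral_mul_const, horth i j]
      _ = ∑ i, G i i := by
          refine Finset.sum_congr rfl fun i _ => ?_
          simp [ite_mul]
  rw [hIeq]
  -- per-term bound
  have hterm : ∀ i, G i i ≤ 2 * η + 4 * s ^ 2 * lam i := by
    intro i
    set a := Real.sqrt (lam i) with ha
    set b := Real.sqrt (tlam i) with hb
    set c := BinnerR M (φ i) (tφ i) with hc
    have ha0 : 0 ≤ a := Real.sqrt_nonneg _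
    have hb0 : 0 ≤ b := Real.sqrt_nonneg _
    have haa : a * a = lam i := Real.mul_self_sqrt (hlam i)
    have hbb : b * b = tlam i := Real.mul_self_sqrt (htlam i)
    have hφφ : φ i ⬝ᵥ M *ᵥ φ i = 1 := by
      have h := hφ i
      rw [vecBnormR] at h
      nlinarith [Real.sq_sqrt (hq0 (φ i)), h]
    have htt : tφ i ⬝ᵥ M *ᵥ tφ i = 1 := by
      have h := htφ i
      rw [vecBnormR] at h
      nlinarith [Real.sq_sqrt (hq0 (tφ i)), h]
    have hφt : φ i ⬝ᵥ M *ᵥ tφ i = c := by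
      rw [hc, BinnerR, hsym]
    have htφ' : tφ i ⬝ᵥ M *ᵥ φ i = c := by rw [hc, BinnerR]
    have hGii : G i i = lam i + tlam i - 2 * (a * b) * c := by
      rw [hGdef]
      simp only [hv]
      simp only [mulVec_sub, mulVec_smul, sub_dotProduct, dotProduct_sub,
        smul_dotProduct, dotProduct_smul, smul_eq_mul, hφφ, htt, hφt, htφ']
      linear_combination haa + hbb
    -- bounds
    have hc0 : 0 ≤ c := hpos i
    have hcs : 1 - c ≤ s ^ 2 := by
      rcases le_total c 1 with h | h
      · nlinarith [hang i, mul_nonneg hc0 (sub_nonneg.mpr h)]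
      · nlinarith [sq_nonneg s]
    have habη : (a - b) ^ 2 ≤ η := by
      have := abs_le.mp (hev i)
      rcases le_total a b with h | h
      · nlinarith
      · nlinarith
    have hab0 : 0 ≤ a * b := mul_nonneg ha0 hb0
    have h2ab : 2 * (a * b) ≤ lam i + tlam i := by nlinarith [sq_nonneg (a - b)]
    have h1 : 2 * (a * b) * (1 - c) ≤ 2 * (a * b) * s ^ 2 :=
      mul_le_mul_of_nonneg_left hcs (by linarith)
    have h2 : 2 * (a * b) * s ^ 2 ≤ (lam i + tlam i) * s ^ 2 :=
      mul_le_mul_of_nonneg_right h2ab (sq_nonneg s)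
    have h3 : tlam i ≤ lam i + η := by
      have := abs_le.mp (hev i); linarith
    have h4 : (lam i + tlam i) * s ^ 2 ≤ (2 * lam i + η) * s ^ 2 :=
      mul_le_mul_of_nonneg_right (by linarith) (sq_nonneg s)
    have hs2 : s ^ 2 ≤ 1 := by nlinarith
    have h5 : η * s ^ 2 ≤ η := mul_le_of_le_one_right hη hs2
    have h6 : 0 ≤ lam i * s ^ 2 := mul_nonneg (hlam i) (sq_nonneg s)
    have e1 : lam i + tlam i - 2 * (a * b) * c = (a - b) ^ 2 + 2 * (a * b) * (1 - c) := by
      linear_combination -haa - hbb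
    have h7 : (2 * lam i + η) * s ^ 2 = 2 * (lam i * s ^ 2) + η * s ^ 2 := by ring
    rw [hGii]
    linarith [e1, habη, h1, h2, h4, h5, h6, h7]
  calc ∑ i, G i i ≤ ∑ i : Fin N, (2 * η + 4 * s ^ 2 * lam i) :=
        Finset.sum_le_sum fun i _ => hterm i
    _ = 2 * N * η + 4 * s ^ 2 * ∑ i, lam i := by
        rw [Finset.sum_add_distrib, Finset.sum_const, ← Finset.mul_sum]
        simp [Finset.card_univ, nsmul_eq_mul]; ring
end
end
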